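/- Let p ≥ 2 and k ≥ 1 be integers and set ω := exp(2πi/p^{2k}) ∈ ℂ, a primitive p^{2k}-th root of unity. Let S³ := {z ∈ ℂ² : ‖z‖ = 1}. Then there exists a continuous map γ : S³ → S³ such that γ(ω·z) = ω^{p^k}·γ(z) for every z ∈ S³ (with · denoting scalar multiplication on ℂ²), and γ is homotopic to a constant map. -/

import Mathlib

noncomputable section

open Complex

/-- The unit sphere `S³` of `ℂ²`. -/
abbrev S3 := Metric.sphere (0 : EuclideanSpace ℂ (Fin 2)) 1

/-- Coordinatewise multiplication by a unit complex scalar, as a self-map of `S³`. -/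
def rotS3 (c : ℂ) (hc : ‖c‖ = 1) (z : S3) : S3 := by
  refine ⟨c • (z : EuclideanSpace ℂ (Fin 2)), ?_⟩
  have hz := mem_sphere_zero_iff_norm.mp z.2
  simp [mem_sphere_zero_iff_norm, norm_smul, hz, hc]

/- Auxiliary development for the proof.

With `m = pᵏ` (so that `n = p^{2k} = m * m`), the key explicit map is
`z = (z₀, z₁) ↦ F z := (z₀^{m+1} · conj z₁, z₁^m − z₀^{m²+m})`, which is nonvanishing on the
sphere, satisfies `F (ω • z) = ω^m • F z`, and after normalization misses the point
`q = (exp (π i / m), 0)` of the sphere (on the zero set of the second coordinate the first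
coordinate has `A^m ≥ 0`, while at `q` one would need `A^m < 0`).  A map into a sphere missing
a point is null-homotopic via the straight-line homotopy to the antipode of the missed point. -/

private abbrev E2 := EuclideanSpace ℂ (Fin 2)

private def Avz (m : ℕ) (z : E2) : ℂ := (z 0) ^ (m + 1) * (starRingEnd ℂ) (z 1)
private def Bvz (m : ℕ) (z : E2) : ℂ := (z 1) ^ m - (z 0) ^ (m * m + m)
private def Fv (m : ℕ) (z : E2) : E2 := WithLp.toLp 2 ![Avz m z, Bvz m z]
private def qe (m : ℕ) : ℂ := Complex.exp ((Real.pi / m : ℝ) * Complex.I)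
private def qv (m : ℕ) : E2 := WithLp.toLp 2 ![qe m, 0]

private lemma normsq2 (z : E2) : ‖z‖ ^ 2 = ‖z 0‖ ^ 2 + ‖z 1‖ ^ 2 := by
  rw [EuclideanSpace.norm_eq, Real.sq_sqrt (by positivity)]
  exact Fin.sum_univ_two _

private lemma hM_ne (m : ℕ) (hm : 1 ≤ m) : m * m + m ≠ 0 := by
  intro h; exact absurd (Nat.add_eq_zero.mp h).2 (by omega)

private lemma Fv_ne (m : ℕ) (hm : 1 ≤ m) (z : E2) (hz : ‖z‖ = 1) : Fv m z ≠ 0 := by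
  intro h
  have h0 : Avz m z = 0 := by
    have : Fv m z 0 = (0 : E2) 0 := by rw [h]
    simpa [Fv] using this
  have h1 : Bvz m z = 0 := by
    have : Fv m z 1 = (0 : E2) 1 := by rw [h]
    simpa [Fv] using this
  rcases eq_or_ne (z 0) 0 with hz0 | hz0
  · have hz1 : z 1 = 0 := by
      have : (z 1) ^ m = 0 := by
        simpa [Bvz, hz0, zero_pow (hM_ne m hm)] using h1
      exact pow_eq_zero_iff (by omega) |>.mp this
    have : ‖z‖ ^ 2 = 0 := by rw [normsq2, hz0, hz1]; simp
    rw [hz] at this; norm_num at this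
  · have hz1 : z 1 = 0 := by
      rcases mul_eq_zero.mp h0 with h' | h'
      · exact absurd (pow_eq_zero_iff (by omega) |>.mp h') hz0
      · simpa using h'
    have h2 : z 0 = 0 := by
      have := h1
      simp [Bvz, hz1, zero_pow (show m ≠ 0 by omega)] at this
      exact this.1
    exact hz0 h2

private lemma Fv_smul (m : ℕ) (c : ℂ) (hcc : c * (starRingEnd ℂ) c = 1)
    (hcm : c ^ (m * m) = 1) (z : E2) : Fv m (c • z) = (c ^ m) • Fv m z := by
  ext i
  fin_cases i
  · show Avz m (c • z) = c ^ m * Avz m z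
    have hs0 : (c • z) 0 = c * z 0 := rfl
    have hs1 : (c • z) 1 = c * z 1 := rfl
    simp only [Avz, hs0, hs1, map_mul, mul_pow]
    linear_combination (c ^ m * (z 0) ^ (m + 1) * (starRingEnd ℂ) (z 1)) * hcc
  · show Bvz m (c • z) = c ^ m * Bvz m z
    have hs0 : (c • z) 0 = c * z 0 := rfl
    have hs1 : (c • z) 1 = c * z 1 := rfl
    simp only [Bvz, hs0, hs1, mul_pow]
    linear_combination (-(c ^ m * (z 0) ^ (m * m + m))) * hcm

private lemma qe_pow (m : ℕ) (hm : 1 ≤ m) : qe m ^ m = -1 := by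
  rw [qe, ← Complex.exp_nat_mul]
  have : (m : ℂ) * ((Real.pi / m : ℝ) * Complex.I) = (Real.pi : ℂ) * Complex.I := by
    have hm0 : (m : ℂ) ≠ 0 := Nat.cast_ne_zero.mpr (by omega)
    push_cast
    field_simp
  rw [this, Complex.exp_pi_mul_I]

private lemma gamma_ne (m : ℕ) (hm : 1 ≤ m) (z : E2) (hz : ‖z‖ = 1) :
    (‖Fv m z‖⁻¹ : ℝ) • Fv m z ≠ qv m := by
  intro h
  have hne := Fv_ne m hm z hz
  have hpos : 0 < ‖Fv m z‖ := norm_pos_iff.mpr hne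
  have h1 : (‖Fv m z‖⁻¹ : ℝ) • Bvz m z = 0 := by
    have : ((‖Fv m z‖⁻¹ : ℝ) • Fv m z) 1 = qv m 1 := by rw [h]
    simpa [Fv, qv] using this
  have hB : Bvz m z = 0 := by
    rcases smul_eq_zero.mp h1 with h' | h'
    · exact absurd h' (by positivity)
    · exact h'
  have h0 : (‖Fv m z‖⁻¹ : ℝ) • Avz m z = qe m := by
    have : ((‖Fv m z‖⁻¹ : ℝ) • Fv m z) 0 = qv m 0 := by rw [h]
    simpa [Fv, qv] using this
  have hA : Avz m z = (‖Fv m z‖ : ℂ) * qe m := by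
    have : (‖Fv m z‖ : ℝ) • ((‖Fv m z‖⁻¹ : ℝ) • Avz m z) = (‖Fv m z‖ : ℝ) • qe m := by
      rw [h0]
    rw [smul_smul, mul_inv_cancel₀ (ne_of_gt hpos), one_smul] at this
    rw [this, Complex.real_smul]
  have hz1m : (z 1) ^ m = (z 0) ^ (m * m + m) := sub_eq_zero.mp hB
  have e1 : Avz m z ^ m = ((Complex.normSq ((z 0) ^ (m * m + m)) : ℝ) : ℂ) := by
    rw [Avz, mul_pow, ← pow_mul, ← map_pow, hz1m]
    rw [show (m + 1) * m = m * m + m by ring]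
    exact Complex.mul_conj _
  have e2 : Avz m z ^ m = -((‖Fv m z‖ ^ m : ℝ) : ℂ) := by
    rw [hA, mul_pow, qe_pow m hm]
    push_cast
    ring
  have : (Complex.normSq ((z 0) ^ (m * m + m)) : ℝ) = -(‖Fv m z‖ ^ m) := by
    have := e1.symm.trans e2
    exact_mod_cast this
  nlinarith [Complex.normSq_nonneg ((z 0) ^ (m * m + m)), pow_pos hpos m]

private lemma contFv (m : ℕ) : Continuous (Fv m) := by
  have h0 : Continuous fun z : E2 => z 0 :=
    (EuclideanSpace.proj (0 : Fin 2) : E2 →L[ℂ] ℂ).continuous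
  have h1 : Continuous fun z : E2 => z 1 :=
    (EuclideanSpace.proj (1 : Fin 2) : E2 →L[ℂ] ℂ).continuous
  have hA : Continuous (Avz m) := (h0.pow _).mul (Complex.continuous_conj.comp h1)
  have hB : Continuous (Bvz m) := (h1.pow _).sub (h0.pow _)
  have hpi : Continuous fun z : E2 => (![Avz m z, Bvz m z] : Fin 2 → ℂ) := by
    apply continuous_pi
    intro i
    fin_cases i
    · simpa using hA
    · simpa using hB
  exact (PiLp.continuous_toLp 2 fun _ : Fin 2 => ℂ).comp hpi

private lemma qv_norm (m : ℕ) : ‖qv m‖ = 1 := by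
  rw [EuclideanSpace.norm_eq]
  have h : ‖qe m‖ = 1 := by
    rw [qe]; exact Complex.norm_exp_ofReal_mul_I _
  simp [qv, Fin.sum_univ_two, h]

/-- With `ω = exp(2πi/p^{2k})`, there is a continuous self-map
`γ` of `S³` with `γ(ω·z) = ω^{pᵏ}·γ(z)` for all `z`, which is homotopic to a
constant map. -/
theorem stmt10 (p k : ℕ) (hp : 2 ≤ p) (hk : 1 ≤ k) :
    ∃ γ : C(S3, S3),
      (∀ z : S3,
        γ (rotS3 (Complex.exp ((2 * Real.pi / (p ^ (2 * k)) : ℝ) * Complex.I))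
            (Complex.norm_exp_ofReal_mul_I _) z) =
          rotS3 ((Complex.exp ((2 * Real.pi / (p ^ (2 * k)) : ℝ) * Complex.I)) ^ p ^ k)
            (by rw [norm_pow, Complex.norm_exp_ofReal_mul_I, one_pow]) (γ z)) ∧
      ∃ c : S3, ContinuousMap.Homotopic γ (ContinuousMap.const S3 c) := by
  set ω : ℂ := Complex.exp ((2 * Real.pi / (p ^ (2 * k)) : ℝ) * Complex.I) with hω
  set m : ℕ := p ^ k with hmdef
  have hm : 1 ≤ m := Nat.one_le_pow _ _ (by omega)
  have habs : ‖ω‖ = 1 := Complex.norm_exp_ofReal_mul_I _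
  have hcc : ω * (starRingEnd ℂ) ω = 1 := by
    rw [Complex.mul_conj]
    rw [Complex.normSq_eq_norm_sq, habs]
    norm_num
  have hpcast : ((p : ℂ)) ^ (2 * k) ≠ 0 := by
    apply pow_ne_zero
    exact_mod_cast (by omega : p ≠ 0)
  have hpow : ω ^ (m * m) = 1 := by
    have h1 : m * m = p ^ (2 * k) := by rw [hmdef, ← pow_add, two_mul]
    rw [h1, hω, ← Complex.exp_nat_mul]
    rw [show ((p ^ (2 * k) : ℕ) : ℂ) * (((2 * Real.pi / (p ^ (2 * k)) : ℝ) : ℂ) * Complex.I)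
        = 2 * (Real.pi : ℂ) * Complex.I by push_cast; field_simp]
    exact Complex.exp_two_pi_mul_I
  have hsz : ∀ z : S3, ‖(z : E2)‖ = 1 := fun z => mem_sphere_zero_iff_norm.mp z.2
  have hFne : ∀ z : S3, Fv m (z : E2) ≠ 0 := fun z => Fv_ne m hm _ (hsz z)
  -- the map γ
  have hγmem : ∀ z : S3, ‖(‖Fv m (z : E2)‖⁻¹ : ℝ) • Fv m (z : E2)‖ = 1 :=
    fun z => norm_smul_inv_norm (hFne z)
  let γf : S3 → S3 := fun z =>
    ⟨(‖Fv m (z : E2)‖⁻¹ : ℝ) • Fv m (z : E2), mem_sphere_zero_iff_norm.mpr (hγmem z)⟩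
  have hγcont : Continuous γf := by
    apply Continuous.subtype_mk
    have hg : Continuous fun z : S3 => Fv m (z : E2) :=
      (contFv m).comp continuous_subtype_val
    exact ((hg.norm).inv₀ fun z => norm_ne_zero_iff.mpr (hFne z)).smul hg
  refine ⟨⟨γf, hγcont⟩, ?_, ?_⟩
  · -- equivariance
    intro z
    apply Subtype.ext
    show (‖Fv m (ω • (z : E2))‖⁻¹ : ℝ) • Fv m (ω • (z : E2))
        = (ω ^ m) • ((‖Fv m (z : E2)‖⁻¹ : ℝ) • Fv m (z : E2))
    rw [Fv_smul m ω hcc hpow, norm_smul]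
    rw [show ‖ω ^ m‖ = 1 by rw [norm_pow, habs, one_pow]]
    rw [one_mul, smul_comm]
  · -- null-homotopy
    have hγq : ∀ z : S3, (γf z : E2) ≠ qv m := fun z => gamma_ne m hm _ (hsz z)
    have hqs : ‖-(qv m)‖ = 1 := by rw [norm_neg, qv_norm]
    refine ⟨⟨-(qv m), mem_sphere_zero_iff_norm.mpr hqs⟩, ?_⟩
    set Nv : unitInterval × S3 → E2 := fun tz =>
      (1 - (tz.1 : ℝ)) • (γf tz.2 : E2) + (tz.1 : ℝ) • (-(qv m)) with hNv
    have hNv_ne : ∀ tz, Nv tz ≠ 0 := by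
      rintro ⟨t, z⟩ h
      have ht0 : (0 : ℝ) ≤ (t : ℝ) := t.2.1
      have ht1 : (t : ℝ) ≤ 1 := t.2.2
      have heq : (1 - (t : ℝ)) • (γf z : E2) = (t : ℝ) • qv m := by
        have h2 := eq_neg_of_add_eq_zero_left h
        rw [h2, smul_neg, neg_neg]
      have hnorm : 1 - (t : ℝ) = (t : ℝ) := by
        have h2 : |1 - (t : ℝ)| * ‖(γf z : E2)‖ = |(t : ℝ)| * ‖qv m‖ := by
          rw [← Real.norm_eq_abs, ← Real.norm_eq_abs, ← norm_smul, ← norm_smul, heq]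
        rw [hsz (γf z), qv_norm, mul_one, mul_one] at h2
        rw [_root_.abs_of_nonneg (by linarith : (0:ℝ) ≤ 1 - (t : ℝ)),
          _root_.abs_of_nonneg ht0] at h2
        exact h2
      have ht : (t : ℝ) ≠ 0 := by intro h'; rw [h'] at hnorm; norm_num at hnorm
      rw [hnorm] at heq
      exact hγq z (smul_right_injective E2 ht heq)
    have hNcont : Continuous Nv := by
      have hγ2 : Continuous fun tz : unitInterval × S3 => (γf tz.2 : E2) :=
        continuous_subtype_val.comp (hγcont.comp continuous_snd)
      have hts : Continuous fun tz : unitInterval × S3 => (tz.1 : ℝ) :=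
        continuous_subtype_val.comp continuous_fst
      exact ((continuous_const.sub hts).smul hγ2).add (hts.smul continuous_const)
    refine ⟨⟨⟨fun tz => ⟨(‖Nv tz‖⁻¹ : ℝ) • Nv tz,
        mem_sphere_zero_iff_norm.mpr (norm_smul_inv_norm (hNv_ne tz))⟩, ?_⟩, ?_, ?_⟩⟩
    · apply Continuous.subtype_mk
      exact ((hNcont.norm).inv₀ fun tz => norm_ne_zero_iff.mpr (hNv_ne tz)).smul hNcont
    · intro z
      apply Subtype.ext
      show (‖Nv (0, z)‖⁻¹ : ℝ) • Nv (0, z) = (γf z : E2)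
      have hN0 : Nv (0, z) = (γf z : E2) := by simp [hNv]
      rw [hN0, hsz (γf z), inv_one, one_smul]
    · intro z
      apply Subtype.ext
      show (‖Nv (1, z)‖⁻¹ : ℝ) • Nv (1, z) = -(qv m)
      have hN1 : Nv (1, z) = -(qv m) := by simp [hNv]
      rw [hN1, hqs, inv_one, one_smul]
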